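/- (Corollary 2, part (ii).) Let μ ∈ (0,1). Suppose ‖D‖ ≤ δ for a known δ > 0, and suppose there exist ε₁ ∈ ℝ, ε₂ ∈ ℝ, Y ∈ ℝ^{n×T}, and P = Pᵀ ∈ ℝ^{n×n} such that the block matrix [[−μP, 0, Y U_{0,T}ᵀ, Y X_{1,T}ᵀ, −δ Y V_{0,T}ᵀ], [0, −ε₁P, 0, 0, δε₁P], [U_{0,T} Yᵀ, 0, −ε₁I, 0, 0], [X_{1,T} Yᵀ, 0, 0, −P + ε₂I, 0], [−δ V_{0,T} Yᵀ, δε₁P, 0, 0, −ε₂I]] is negative definite and P = X_{0,T} Yᵀ. Set Q := P⁻¹, K := U_{0,T} Yᵀ (X_{0,T} Yᵀ)⁻¹, and f(x) := A x + B (K x) + D x (K x). Then every solution of x(t+1) = f(x(t)) with x(0) ∈ ℰ_Q := {x : xᵀ Q x ≤ 1} satisfies x(t) ∈ ℰ_Q and x(t)ᵀ Q x(t) ≤ μᵗ · x(0)ᵀ Q x(0) for all t ≥ 0; in particular the origin is exponentially stable for the closed loop and its basin of attraction contains ℰ_Q. -/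

import Mathlib

open Matrix Filter
open scoped Matrix.Norms.L2Operator Topology

/-- The data-based 5×5 block matrix with `(1,1)` block `−μP`, blocks of sizes
`[n, n, 1, n, n]`:
`[[−μP, 0, Y U₀ᵀ, Y X₁ᵀ, −δ Y V₀ᵀ], [0, −ε₁P, 0, 0, δε₁P], [U₀ Yᵀ, 0, −ε₁I, 0, 0],
[X₁ Yᵀ, 0, 0, −P + ε₂I, 0], [−δ V₀ Yᵀ, δε₁P, 0, 0, −ε₂I]]`. -/
def dataBlockMat5Mu {n T : ℕ} (μ : ℝ)
    (P : Matrix (Fin n) (Fin n) ℝ) (Y : Matrix (Fin n) (Fin T) ℝ)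
    (U₀ : Matrix (Fin 1) (Fin T) ℝ) (X₁ V₀ : Matrix (Fin n) (Fin T) ℝ)
    (δ ε₁ ε₂ : ℝ) :
    Matrix (((Fin n ⊕ Fin n) ⊕ (Fin 1 ⊕ Fin n)) ⊕ Fin n)
      (((Fin n ⊕ Fin n) ⊕ (Fin 1 ⊕ Fin n)) ⊕ Fin n) ℝ :=
  Matrix.fromBlocks
    (Matrix.fromBlocks
      (Matrix.fromBlocks (-(μ • P)) 0 0 (-(ε₁ • P)))
      (Matrix.fromBlocks (Y * U₀ᵀ) (Y * X₁ᵀ) 0 0)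
      (Matrix.fromBlocks (U₀ * Yᵀ) 0 (X₁ * Yᵀ) 0)
      (Matrix.fromBlocks (-(ε₁ • (1 : Matrix (Fin 1) (Fin 1) ℝ))) 0 0
        (-P + ε₂ • (1 : Matrix (Fin n) (Fin n) ℝ))))
    (Matrix.fromRows
      (Matrix.fromRows (-(δ • (Y * V₀ᵀ))) ((δ * ε₁) • P))
      (Matrix.fromRows (0 : Matrix (Fin 1) (Fin n) ℝ) (0 : Matrix (Fin n) (Fin n) ℝ)))
    (Matrix.fromCols
      (Matrix.fromCols (-(δ • (V₀ * Yᵀ))) ((δ * ε₁) • P))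
      (Matrix.fromCols (0 : Matrix (Fin n) (Fin 1) ℝ) (0 : Matrix (Fin n) (Fin n) ℝ)))
    (-(ε₂ • (1 : Matrix (Fin n) (Fin n) ℝ)))

set_option maxHeartbeats 1000000
section AuxLemmas


lemma dot_self_eq_norm_sq {n : ℕ} (v : Fin n → ℝ) :
    v ⬝ᵥ v = ‖(EuclideanSpace.equiv (Fin n) ℝ).symm v‖ ^ 2 := by
  rw [EuclideanSpace.norm_eq, Real.sq_sqrt (by positivity)]
  simp [dotProduct, sq]

lemma mulVec_dot_le {n : ℕ} (D : Matrix (Fin n) (Fin n) ℝ) {δ : ℝ} (hδ : 0 ≤ δ)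
    (hD : ‖D‖ ≤ δ) (w : Fin n → ℝ) :
    (D *ᵥ w) ⬝ᵥ (D *ᵥ w) ≤ δ ^ 2 * (w ⬝ᵥ w) := by
  have h := D.l2_opNorm_mulVec ((EuclideanSpace.equiv (Fin n) ℝ).symm w)
  have h2 : ‖(EuclideanSpace.equiv (Fin n) ℝ).symm (D *ᵥ w)‖ ≤
      δ * ‖(EuclideanSpace.equiv (Fin n) ℝ).symm w‖ :=
    h.trans (mul_le_mul_of_nonneg_right hD (norm_nonneg _))
  rw [dot_self_eq_norm_sq, dot_self_eq_norm_sq]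
  calc ‖(EuclideanSpace.equiv (Fin n) ℝ).symm (D *ᵥ w)‖ ^ 2
      ≤ (δ * ‖(EuclideanSpace.equiv (Fin n) ℝ).symm w‖) ^ 2 :=
        pow_le_pow_left₀ (norm_nonneg _) h2 2
    _ = δ ^ 2 * ‖(EuclideanSpace.equiv (Fin n) ℝ).symm w‖ ^ 2 := by ring

lemma quad_expand {n T : ℕ} (μ : ℝ)
    (P : Matrix (Fin n) (Fin n) ℝ) (Y : Matrix (Fin n) (Fin T) ℝ)
    (U₀ : Matrix (Fin 1) (Fin T) ℝ) (X₁ V₀ : Matrix (Fin n) (Fin T) ℝ)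
    (δ ε₁ ε₂ : ℝ) (a b c d : Fin n → ℝ) (s : Fin 1 → ℝ) :
    (Sum.elim (Sum.elim (Sum.elim a b) (Sum.elim s c)) d) ⬝ᵥ
      (dataBlockMat5Mu μ P Y U₀ X₁ V₀ δ ε₁ ε₂) *ᵥ
      (Sum.elim (Sum.elim (Sum.elim a b) (Sum.elim s c)) d) =
    -(μ * (a ⬝ᵥ P *ᵥ a)) - ε₁ * (b ⬝ᵥ P *ᵥ b)
      + a ⬝ᵥ (Y * U₀ᵀ) *ᵥ s + a ⬝ᵥ (Y * X₁ᵀ) *ᵥ c - δ * (a ⬝ᵥ (Y * V₀ᵀ) *ᵥ d)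
      + (δ * ε₁) * (b ⬝ᵥ P *ᵥ d)
      + s ⬝ᵥ (U₀ * Yᵀ) *ᵥ a - ε₁ * (s ⬝ᵥ s)
      + c ⬝ᵥ (X₁ * Yᵀ) *ᵥ a - c ⬝ᵥ P *ᵥ c + ε₂ * (c ⬝ᵥ c)
      - δ * (d ⬝ᵥ (V₀ * Yᵀ) *ᵥ a) + (δ * ε₁) * (d ⬝ᵥ P *ᵥ b)
      - ε₂ * (d ⬝ᵥ d) := by
  simp only [dataBlockMat5Mu, Matrix.fromBlocks_mulVec, Matrix.fromRows_mulVec,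
    Matrix.fromCols_mulVec_sumElim, sumElim_dotProduct_sumElim,
    dotProduct_add, add_dotProduct, Matrix.neg_mulVec, Matrix.add_mulVec,
    Matrix.smul_mulVec, Matrix.one_mulVec, Matrix.zero_mulVec,
    dotProduct_neg, dotProduct_smul, dotProduct_zero,
    smul_eq_mul, Matrix.mulVec_zero, add_zero, zero_add, Sum.elim_comp_inl, Sum.elim_comp_inr]
  ring
lemma arith_key {μ δ ε₁ ε₂ t1 xpQ wPw ww cc qd xw dd kx : ℝ}
    (hε₁ : 0 < ε₁) (hε₂ : 0 < ε₂)
    (hwPw0 : 0 ≤ wPw) (hww0 : 0 ≤ ww) (hcc0 : 0 ≤ cc) (hdd0 : 0 ≤ dd)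
    (hx1 : t1 ≤ 1)
    (F1 : qd ^ 2 ≤ cc * dd) (F2 : dd ≤ δ ^ 2 * ww) (F3 : xw ^ 2 ≤ t1 * wPw)
    (hineq :
      -(μ * ((ε₁ * ε₂) ^ 2 * t1)) - ε₁ ^ 3 * δ ^ 4 * wPw
      + 2 * (ε₁ * ε₂ ^ 2) * kx ^ 2
      + 2 * ((ε₁ * ε₂) ^ 2 * (xpQ - qd))
      - 2 * (δ ^ 2 * ε₁ * (ε₁ * ε₂) * (kx * xw - ww))
      + 2 * (ε₁ ^ 3 * δ ^ 4 * wPw)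
      - ε₁ * ε₂ ^ 2 * kx ^ 2
      - (ε₁ * ε₂) ^ 2 * xpQ
      + ε₂ * ((ε₁ * ε₂) ^ 2 * cc)
      - ε₂ * (ε₁ ^ 2 * δ ^ 2 * ww) ≤ 0) :
    xpQ ≤ μ * t1 := by
  have hE2 : (0:ℝ) < (ε₁ * ε₂) ^ 2 := by positivity
  have hxw2 : xw ^ 2 ≤ wPw := by nlinarith [mul_le_mul_of_nonneg_right hx1 hwPw0]
  -- cross-term bound 2 : (ε₂ kx − ε₁ δ² xw)² ≥ 0
  have hb2 : 2 * (ε₁ ^ 2 * ε₂ * δ ^ 2) * (kx * xw) ≤ ε₁ * ε₂ ^ 2 * kx ^ 2 + ε₁ ^ 3 * δ ^ 4 * wPw := by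
    have h := sq_nonneg (ε₂ * kx - ε₁ * δ ^ 2 * xw)
    nlinarith [mul_nonneg (mul_nonneg (sq_nonneg ε₁) (sq_nonneg (δ^2))) (sub_nonneg.mpr hxw2),
      mul_le_mul_of_nonneg_left (sub_nonneg.mpr hxw2) (by positivity : (0:ℝ) ≤ ε₁ ^ 2 * δ ^ 4),
      mul_le_mul_of_nonneg_left h hε₁.le]
  -- cross-term bound 1 : 2 ε₂ qd ≤ ε₂² cc + δ² ww
  have hq2 : qd ^ 2 ≤ δ ^ 2 * (cc * ww) := by nlinarith [mul_le_mul_of_nonneg_left F2 hcc0]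
  have hb1 : 2 * ε₂ * qd ≤ ε₂ ^ 2 * cc + δ ^ 2 * ww := by
    rcases le_or_gt qd 0 with h | h
    · nlinarith [mul_nonneg (sq_nonneg ε₂) hcc0, mul_nonneg (sq_nonneg δ) hww0]
    · nlinarith [sq_nonneg (ε₂ ^ 2 * cc - δ ^ 2 * ww), mul_pos hε₂ h,
        mul_nonneg (sq_nonneg ε₂) hcc0, mul_nonneg (sq_nonneg δ) hww0]
  have hb1' : 2 * (ε₁ * ε₂) ^ 2 * qd ≤ ε₂ * ((ε₁ * ε₂) ^ 2 * cc) + ε₂ * (ε₁ ^ 2 * δ ^ 2 * ww) := by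
    have := mul_le_mul_of_nonneg_left hb1 (by positivity : (0:ℝ) ≤ ε₁ ^ 2 * ε₂)
    nlinarith [this]
  have hb2' : 2 * (δ ^ 2 * ε₁ * (ε₁ * ε₂)) * (kx * xw)
      ≤ ε₁ * ε₂ ^ 2 * kx ^ 2 + ε₁ ^ 3 * δ ^ 4 * wPw := by
    nlinarith [hb2]
  have final : (ε₁ * ε₂) ^ 2 * xpQ ≤ (ε₁ * ε₂) ^ 2 * (μ * t1) := by linarith [hineq, hb1', hb2']
  exact le_of_mul_le_mul_left (by linarith [final]) hE2

lemma cs_psd {n : ℕ} {P : Matrix (Fin n) (Fin n) ℝ} (hP : P.PosSemidef)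
    (u v : Fin n → ℝ) :
    (u ⬝ᵥ P *ᵥ v) ^ 2 ≤ (u ⬝ᵥ P *ᵥ u) * (v ⬝ᵥ P *ᵥ v) := by
  have hsym : Pᵀ = P := hP.1
  have key : ∀ t : ℝ, 0 ≤ (v ⬝ᵥ P *ᵥ v) * (t * t) + (2 * (u ⬝ᵥ P *ᵥ v)) * t + (u ⬝ᵥ P *ᵥ u) := by
    intro t
    have h0 := hP.dotProduct_mulVec_nonneg (u + t • v)
    simp only [star_trivial] at h0
    have hvu : v ⬝ᵥ P *ᵥ u = u ⬝ᵥ P *ᵥ v := by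
      rw [Matrix.dotProduct_mulVec, ← Matrix.mulVec_transpose, hsym, dotProduct_comm]
    calc (0:ℝ) ≤ (u + t • v) ⬝ᵥ P *ᵥ (u + t • v) := h0
    _ = (v ⬝ᵥ P *ᵥ v) * (t * t) + (2 * (u ⬝ᵥ P *ᵥ v)) * t + (u ⬝ᵥ P *ᵥ u) := by
        simp [Matrix.mulVec_add, Matrix.mulVec_smul, add_dotProduct,
          dotProduct_add, smul_dotProduct, dotProduct_smul,
          smul_eq_mul, hvu]
        ring
  have := discrim_le_zero key
  simp [discrim] at this
  nlinarith [this]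

lemma dot_self_nonneg' {n : ℕ} (v : Fin n → ℝ) : 0 ≤ v ⬝ᵥ v :=
  Finset.sum_nonneg fun i _ => mul_self_nonneg _

lemma key_step {n T : ℕ} {μ δ ε₁ ε₂ : ℝ} (hμ : 0 < μ) (hδ : 0 < δ) (hε₁ : 0 < ε₁)
    (hε₂ : 0 < ε₂)
    {P Q : Matrix (Fin n) (Fin n) ℝ} (hPsd : P.PosSemidef) (hQsd : Q.PosSemidef)
    (hPQ : P * Q = 1)
    {D : Matrix (Fin n) (Fin n) ℝ}
    (hDle : ∀ w : Fin n → ℝ, (D *ᵥ w) ⬝ᵥ (D *ᵥ w) ≤ δ ^ 2 * (w ⬝ᵥ w))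
    {Y : Matrix (Fin n) (Fin T) ℝ} {U₀ : Matrix (Fin 1) (Fin T) ℝ}
    {X₁ V₀ : Matrix (Fin n) (Fin T) ℝ}
    (hM : ∀ v, v ⬝ᵥ (dataBlockMat5Mu μ P Y U₀ X₁ V₀ δ ε₁ ε₂) *ᵥ v ≤ 0)
    (x xp w : Fin n → ℝ) (kx : ℝ)
    (hU : (U₀ * Yᵀ * Q) *ᵥ x = fun _ => kx)
    (hX : (X₁ * Yᵀ * Q) *ᵥ x = xp - D *ᵥ w)
    (hV : (V₀ * Yᵀ * Q) *ᵥ x = kx • x - w)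
    (hx1 : x ⬝ᵥ Q *ᵥ x ≤ 1) :
    xp ⬝ᵥ Q *ᵥ xp ≤ μ * (x ⬝ᵥ Q *ᵥ x) := by
  have hPsym : Pᵀ = P := hPsd.1
  have ePQx : ∀ v : Fin n → ℝ, P *ᵥ (Q *ᵥ v) = v := by
    intro v; rw [Matrix.mulVec_mulVec, hPQ, Matrix.one_mulVec]
  have hUa : (U₀ * Yᵀ) *ᵥ (Q *ᵥ x) = fun _ => kx := by
    rw [Matrix.mulVec_mulVec]; exact hU
  have hXa : (X₁ * Yᵀ) *ᵥ (Q *ᵥ x) = xp - D *ᵥ w := by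
    rw [Matrix.mulVec_mulVec]; exact hX
  have hVa : (V₀ * Yᵀ) *ᵥ (Q *ᵥ x) = kx • x - w := by
    rw [Matrix.mulVec_mulVec]; exact hV
  have hineq := hM (Sum.elim (Sum.elim (Sum.elim ((ε₁ * ε₂) • (Q *ᵥ x)) ((ε₁ * δ ^ 2) • w))
    (Sum.elim (fun _ => ε₂ * kx) ((ε₁ * ε₂) • (Q *ᵥ xp)))) ((ε₁ * δ) • w))
  rw [quad_expand] at hineq
  have tYU : Y * U₀ᵀ = (U₀ * Yᵀ)ᵀ := by rw [Matrix.transpose_mul, Matrix.transpose_transpose]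
  have tYX : Y * X₁ᵀ = (X₁ * Yᵀ)ᵀ := by rw [Matrix.transpose_mul, Matrix.transpose_transpose]
  have tYV : Y * V₀ᵀ = (V₀ * Yᵀ)ᵀ := by rw [Matrix.transpose_mul, Matrix.transpose_transpose]
  rw [tYU, tYX, tYV,
    Matrix.dotProduct_mulVec ((ε₁ * ε₂) • (Q *ᵥ x)) (U₀ * Yᵀ)ᵀ, Matrix.vecMul_transpose,
    Matrix.dotProduct_mulVec ((ε₁ * ε₂) • (Q *ᵥ x)) (X₁ * Yᵀ)ᵀ, Matrix.vecMul_transpose,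
    Matrix.dotProduct_mulVec ((ε₁ * ε₂) • (Q *ᵥ x)) (V₀ * Yᵀ)ᵀ, Matrix.vecMul_transpose] at hineq
  have cqx : ∀ v : Fin n → ℝ, (Q *ᵥ v) ⬝ᵥ v = v ⬝ᵥ Q *ᵥ v := fun v => dotProduct_comm _ _
  have cdw : (D *ᵥ w) ⬝ᵥ (Q *ᵥ xp) = (Q *ᵥ xp) ⬝ᵥ (D *ᵥ w) := dotProduct_comm _ _
  have cwx : w ⬝ᵥ x = x ⬝ᵥ w := dotProduct_comm _ _
  have k1 : (fun _ : Fin 1 => kx) ⬝ᵥ (fun _ : Fin 1 => ε₂ * kx) = kx * (ε₂ * kx) := by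
    simp [dotProduct]
  have k2 : (fun _ : Fin 1 => ε₂ * kx) ⬝ᵥ (fun _ : Fin 1 => kx) = ε₂ * kx * kx := by
    simp [dotProduct]
  have k3 : (fun _ : Fin 1 => ε₂ * kx) ⬝ᵥ (fun _ : Fin 1 => ε₂ * kx) = (ε₂ * kx) * (ε₂ * kx) := by
    simp [dotProduct]
  simp only [Matrix.mulVec_smul, hUa, hXa, hVa, smul_dotProduct, dotProduct_smul,
    ePQx, smul_eq_mul, sub_dotProduct, dotProduct_sub,
    k1, k2, k3, cqx, cdw, cwx] at hineq
  -- nonnegativity and CS facts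
  have hwPw0 : 0 ≤ w ⬝ᵥ P *ᵥ w := by simpa using hPsd.dotProduct_mulVec_nonneg w
  have hww0 : 0 ≤ w ⬝ᵥ w := dot_self_nonneg' w
  have hcc0 : 0 ≤ (Q *ᵥ xp) ⬝ᵥ (Q *ᵥ xp) := dot_self_nonneg' _
  have hdd0 : 0 ≤ (D *ᵥ w) ⬝ᵥ (D *ᵥ w) := dot_self_nonneg' _
  have F1 : ((Q *ᵥ xp) ⬝ᵥ (D *ᵥ w)) ^ 2
      ≤ ((Q *ᵥ xp) ⬝ᵥ (Q *ᵥ xp)) * ((D *ᵥ w) ⬝ᵥ (D *ᵥ w)) := by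
    have h := cs_psd (Matrix.PosSemidef.one (n := Fin n) (R := ℝ)) (Q *ᵥ xp) (D *ᵥ w)
    simpa [Matrix.one_mulVec] using h
  have F2 : (D *ᵥ w) ⬝ᵥ (D *ᵥ w) ≤ δ ^ 2 * (w ⬝ᵥ w) := hDle w
  have F3 : (x ⬝ᵥ w) ^ 2 ≤ (x ⬝ᵥ Q *ᵥ x) * (w ⬝ᵥ P *ᵥ w) := by
    have h := cs_psd hPsd (Q *ᵥ x) w
    have e1 : (Q *ᵥ x) ⬝ᵥ P *ᵥ w = x ⬝ᵥ w := by
      rw [Matrix.dotProduct_mulVec, ← Matrix.mulVec_transpose, hPsym, Matrix.mulVec_mulVec,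
        hPQ, Matrix.one_mulVec]
    have e2 : (Q *ᵥ x) ⬝ᵥ P *ᵥ (Q *ᵥ x) = x ⬝ᵥ Q *ᵥ x := by
      rw [ePQx]; exact cqx x
    rw [e1, e2] at h; exact h
  set t1 : ℝ := x ⬝ᵥ Q *ᵥ x with ht1
  set xpQ : ℝ := xp ⬝ᵥ Q *ᵥ xp with hxpQ
  set wPw : ℝ := w ⬝ᵥ P *ᵥ w with hwPw
  set ww : ℝ := w ⬝ᵥ w with hww
  set cc : ℝ := (Q *ᵥ xp) ⬝ᵥ (Q *ᵥ xp) with hcc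
  set qd : ℝ := (Q *ᵥ xp) ⬝ᵥ (D *ᵥ w) with hqd
  set xw : ℝ := x ⬝ᵥ w with hxw
  set dd : ℝ := (D *ᵥ w) ⬝ᵥ (D *ᵥ w) with hdd
  clear_value t1 xpQ wPw ww cc qd xw dd
  exact arith_key (kx := kx) (μ := μ) hε₁ hε₂ hwPw0 hww0 hcc0 hdd0 hx1 F1 F2 F3 (by refine le_trans (le_of_eq ?_) hineq; ring)

end AuxLemmas

/-- Corollary 2, part (ii): with the `(1,1)` block of the data-based LMI replaced
by `−μP`, every closed-loop solution starting in `ℰ_Q` stays in `ℰ_Q`, satisfies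
the exponential decay bound `x(t)ᵀ Q x(t) ≤ μᵗ x(0)ᵀ Q x(0)`, and converges to
the origin (exponential stability with basin containing `ℰ_Q`). -/
theorem data_based_exponential_stability {n T : ℕ} (hn : 0 < n) (hT : 0 < T)
    (μ : ℝ) (hμ : μ ∈ Set.Ioo (0 : ℝ) 1)
    (A : Matrix (Fin n) (Fin n) ℝ) (B : Matrix (Fin n) (Fin 1) ℝ)
    (D : Matrix (Fin n) (Fin n) ℝ)
    (δ : ℝ) (hδ : 0 < δ) (hD : ‖D‖ ≤ δ)
    (u : ℕ → ℝ) (x : ℕ → Matrix (Fin n) (Fin 1) ℝ)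
    (hdyn : ∀ t < T, x (t + 1) = A * x t + u t • B + u t • (D * x t))
    (U₀ : Matrix (Fin 1) (Fin T) ℝ)
    (hU₀ : U₀ = Matrix.of fun (_ : Fin 1) (t : Fin T) => u t)
    (X₀ : Matrix (Fin n) (Fin T) ℝ)
    (hX₀ : X₀ = Matrix.of fun (i : Fin n) (t : Fin T) => x t i 0)
    (X₁ : Matrix (Fin n) (Fin T) ℝ)
    (hX₁ : X₁ = Matrix.of fun (i : Fin n) (t : Fin T) => x (t + 1) i 0)
    (V₀ : Matrix (Fin n) (Fin T) ℝ)
    (hV₀ : V₀ = Matrix.of fun (i : Fin n) (t : Fin T) => x t i 0 * u t)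
    (ε₁ ε₂ : ℝ) (Y : Matrix (Fin n) (Fin T) ℝ)
    (P : Matrix (Fin n) (Fin n) ℝ) (hPsym : P = Pᵀ)
    (hblock : (-(dataBlockMat5Mu μ P Y U₀ X₁ V₀ δ ε₁ ε₂)).PosDef)
    (hP : P = X₀ * Yᵀ)
    (Q : Matrix (Fin n) (Fin n) ℝ) (hQ : Q = P⁻¹)
    (K : Matrix (Fin 1) (Fin n) ℝ) (hK : K = U₀ * Yᵀ * (X₀ * Yᵀ)⁻¹)
    (f : Matrix (Fin n) (Fin 1) ℝ → Matrix (Fin n) (Fin 1) ℝ)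
    (hf : ∀ y : Matrix (Fin n) (Fin 1) ℝ, f y = A * y + B * (K * y) + D * y * (K * y))
    (E : Set (Matrix (Fin n) (Fin 1) ℝ))
    (hE : E = {y : Matrix (Fin n) (Fin 1) ℝ | (yᵀ * Q * y) 0 0 ≤ 1}) :
    ∀ z : ℕ → Matrix (Fin n) (Fin 1) ℝ, (∀ t : ℕ, z (t + 1) = f (z t)) →
      z 0 ∈ E →
        (∀ t : ℕ, z t ∈ E) ∧
        (∀ t : ℕ, ((z t)ᵀ * Q * z t) 0 0 ≤ μ ^ t * (((z 0)ᵀ * Q * z 0) 0 0)) ∧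
        Tendsto z atTop (𝓝 0) := by
  intro z hz hz0
  obtain ⟨hμ0, hμ1⟩ := hμ
  -- quadratic form facts from the LMI
  have hM : ∀ v, v ⬝ᵥ (dataBlockMat5Mu μ P Y U₀ X₁ V₀ δ ε₁ ε₂) *ᵥ v ≤ 0 := by
    intro v
    have h := hblock.posSemidef.dotProduct_mulVec_nonneg v
    simp only [star_trivial, Matrix.neg_mulVec, dotProduct_neg] at h
    linarith
  have hε₁ : 0 < ε₁ := by
    have hvne : (Sum.elim (Sum.elim (Sum.elim (0 : Fin n → ℝ) (0 : Fin n → ℝ))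
        (Sum.elim (fun _ : Fin 1 => (1:ℝ)) (0 : Fin n → ℝ))) (0 : Fin n → ℝ)) ≠ 0 := by
      intro h
      have := congrFun h (Sum.inl (Sum.inr (Sum.inl 0)))
      simp at this
    have h := hblock.dotProduct_mulVec_pos hvne
    simp only [star_trivial, Matrix.neg_mulVec, dotProduct_neg] at h
    rw [quad_expand] at h
    simp [dotProduct] at h
    linarith
  have hε₂ : 0 < ε₂ := by
    have hvne : (Sum.elim (Sum.elim (Sum.elim (0 : Fin n → ℝ) (0 : Fin n → ℝ))
        (Sum.elim (0 : Fin 1 → ℝ) (0 : Fin n → ℝ))) (fun _ : Fin n => (1:ℝ))) ≠ 0 := by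
      intro h
      have := congrFun h (Sum.inr ⟨0, hn⟩)
      simp at this
    have h := hblock.dotProduct_mulVec_pos hvne
    simp only [star_trivial, Matrix.neg_mulVec, dotProduct_neg] at h
    rw [quad_expand] at h
    simp [dotProduct] at h
    have hcn : (0:ℝ) < (n : ℝ) := by exact_mod_cast hn
    nlinarith
  have hPd : P.PosDef := by
    apply Matrix.PosDef.of_dotProduct_mulVec_pos
    · show Pᴴ = P
      have : Pᴴ = Pᵀ := by ext i j; simp [Matrix.conjTranspose_apply]
      rw [this, ← hPsym]
    · intro a ha
      have hvne : (Sum.elim (Sum.elim (Sum.elim a (0 : Fin n → ℝ))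
          (Sum.elim (0 : Fin 1 → ℝ) (0 : Fin n → ℝ))) (0 : Fin n → ℝ)) ≠ 0 := by
        intro h
        apply ha
        funext i
        have := congrFun h (Sum.inl (Sum.inl (Sum.inl i)))
        simpa using this
      have h := hblock.dotProduct_mulVec_pos hvne
      simp only [star_trivial, Matrix.neg_mulVec, dotProduct_neg] at h
      rw [quad_expand] at h
      simp at h
      simp only [star_trivial]
      nlinarith
  have hPsd : P.PosSemidef := hPd.posSemidef
  have hQd : Q.PosDef := hQ ▸ hPd.inv
  have hQsd : Q.PosSemidef := hQd.posSemidef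
  have hPdet : IsUnit P.det := (Matrix.isUnit_iff_isUnit_det P).mp hPd.isUnit
  have hPQ1 : P * Q = 1 := by rw [hQ]; exact Matrix.mul_nonsing_inv _ hPdet
  have hQP1 : Q * P = 1 := by rw [hQ]; exact Matrix.nonsing_inv_mul _ hPdet
  have hDle : ∀ w : Fin n → ℝ, (D *ᵥ w) ⬝ᵥ (D *ᵥ w) ≤ δ ^ 2 * (w ⬝ᵥ w) :=
    fun w => mulVec_dot_le D hδ.le hD w
  -- data identity
  have hdata : X₁ = A * X₀ + B * U₀ + D * V₀ := by
    subst hU₀ hX₀ hX₁ hV₀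
    ext i t
    rw [Matrix.add_apply, Matrix.add_apply]
    have hxt := hdyn t t.2
    simp only [Matrix.of_apply, hxt, Matrix.add_apply, Matrix.smul_apply, smul_eq_mul,
      Matrix.mul_apply, Fin.sum_univ_one, Matrix.of_apply]
    congr 1
    · congr 1
      exact mul_comm _ _
    · rw [Finset.mul_sum]
      exact Finset.sum_congr rfl fun j _ => by ring
  -- matrix identities
  have hKQ : U₀ * Yᵀ * Q = K := by rw [hK, ← hP, ← hQ]
  have hX0Q : X₀ * Yᵀ * Q = 1 := by rw [← hP, hPQ1]
  have hX1Q : X₁ * Yᵀ * Q = A + B * K + D * (V₀ * Yᵀ * Q) := by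
    calc X₁ * Yᵀ * Q = (A * X₀ + B * U₀ + D * V₀) * Yᵀ * Q := by rw [← hdata]
    _ = A * (X₀ * Yᵀ * Q) + B * (U₀ * Yᵀ * Q) + D * (V₀ * Yᵀ * Q) := by
        simp only [Matrix.add_mul, Matrix.mul_assoc]
    _ = A + B * K + D * (V₀ * Yᵀ * Q) := by rw [hX0Q, hKQ, Matrix.mul_one]
  -- vectorized trajectory
  set xv : ℕ → (Fin n → ℝ) := fun t i => z t i 0 with hxv
  set Kv : Fin n → ℝ := fun j => K 0 j with hKv
  set Bv : Fin n → ℝ := fun i => B i 0 with hBv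
  set kx : ℕ → ℝ := fun t => Kv ⬝ᵥ xv t with hkx
  set wv : ℕ → (Fin n → ℝ) := fun t => kx t • xv t - (V₀ * Yᵀ * Q) *ᵥ xv t with hwv
  have hKz : ∀ t, (K * z t) 0 0 = kx t := by
    intro t; simp [Matrix.mul_apply, hkx, hKv, hxv, dotProduct]
  have hxp : ∀ t, xv (t + 1)
      = A *ᵥ xv t + kx t • Bv + kx t • (D *ᵥ xv t) := by
    intro t
    funext i
    have hzt := hz t
    rw [hf] at hzt
    have : xv (t+1) i = (A * z t + B * (K * z t) + D * z t * (K * z t)) i 0 := by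
      rw [hxv]; simp only; rw [hzt]
    rw [this]
    simp only [Matrix.add_apply, Matrix.mul_apply, Fin.sum_univ_one, Pi.add_apply,
      Pi.smul_apply, smul_eq_mul]
    simp only [hkx, hKv, hxv, hBv, Matrix.mulVec, dotProduct]
    ring
  have hKmv : ∀ t, K *ᵥ xv t = fun _ => kx t := by
    intro t
    funext j
    have hj : j = 0 := Subsingleton.elim _ _
    subst hj
    simp [Matrix.mulVec, hkx, hKv, dotProduct]
  have hUv : ∀ t, (U₀ * Yᵀ * Q) *ᵥ xv t = fun _ => kx t := by
    intro t; rw [hKQ]; exact hKmv t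
  have hVv : ∀ t, (V₀ * Yᵀ * Q) *ᵥ xv t = kx t • xv t - wv t := by
    intro t; rw [hwv]; simp
  have hXv : ∀ t, (X₁ * Yᵀ * Q) *ᵥ xv t = xv (t + 1) - D *ᵥ wv t := by
    intro t
    rw [hX1Q]
    rw [Matrix.add_mulVec, Matrix.add_mulVec]
    rw [← Matrix.mulVec_mulVec, ← Matrix.mulVec_mulVec]
    rw [hKmv t]
    have hBk : B *ᵥ (fun _ : Fin 1 => kx t) = kx t • Bv := by
      funext i; simp [Matrix.mulVec, dotProduct, hBv, mul_comm]
    rw [hBk, hVv t, Matrix.mulVec_sub, Matrix.mulVec_smul, hxp t]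
    abel
  -- Lyapunov values
  have hVQ : ∀ y : Matrix (Fin n) (Fin 1) ℝ,
      (yᵀ * Q * y) 0 0 = (fun i => y i 0) ⬝ᵥ Q *ᵥ (fun i => y i 0) := by
    intro y
    have h1 : (yᵀ * Q * y) 0 0 = ∑ j, (∑ i, y i 0 * Q i j) * y j 0 := by
      simp [Matrix.mul_apply, Matrix.transpose_apply]
    rw [h1]
    simp only [Finset.sum_mul]
    rw [Finset.sum_comm]
    simp only [dotProduct, Matrix.mulVec, Finset.mul_sum]
    exact Finset.sum_congr rfl fun i _ => Finset.sum_congr rfl fun j _ => by ring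
  set V : ℕ → ℝ := fun t => xv t ⬝ᵥ Q *ᵥ xv t with hV
  have hVz : ∀ t, ((z t)ᵀ * Q * z t) 0 0 = V t := by
    intro t; rw [hVQ (z t)]
  have hV0 : 0 ≤ V 0 := by simpa using hQsd.dotProduct_mulVec_nonneg (xv 0)
  have hVnn : ∀ t, 0 ≤ V t := fun t => by simpa using hQsd.dotProduct_mulVec_nonneg (xv t)
  have hz0' : V 0 ≤ 1 := by
    rw [hE] at hz0
    rw [← hVz 0]
    exact hz0
  have step : ∀ t, V t ≤ 1 → V (t + 1) ≤ μ * V t := by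
    intro t h1
    exact key_step hμ0 hδ hε₁ hε₂ hPsd hQsd hPQ1 hDle hM (xv t) (xv (t+1)) (wv t) (kx t)
      (hUv t) (hXv t) (hVv t) h1
  have decay : ∀ t, V t ≤ μ ^ t * V 0 ∧ V t ≤ 1 := by
    intro t
    induction t with
    | zero => exact ⟨by simp, hz0'⟩
    | succ t ih =>
      have h3 := step t ih.2
      constructor
      · calc V (t + 1) ≤ μ * V t := h3
          _ ≤ μ * (μ ^ t * V 0) := mul_le_mul_of_nonneg_left ih.1 hμ0.le
          _ = μ ^ (t + 1) * V 0 := by ring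
      · calc V (t + 1) ≤ μ * V t := h3
          _ ≤ μ * 1 := mul_le_mul_of_nonneg_left ih.2 hμ0.le
          _ ≤ 1 := by linarith
  refine ⟨?_, ?_, ?_⟩
  · intro t
    rw [hE]
    show ((z t)ᵀ * Q * z t) 0 0 ≤ 1
    rw [hVz t]
    exact (decay t).2
  · intro t
    rw [hVz t, hVz 0]
    exact (decay t).1
  · -- convergence to the origin
    set CP : ℝ := ∑ i, ∑ j, (P i j) ^ 2 with hCP
    have hCP0 : 0 ≤ CP := by positivity
    have hPvv : ∀ v : Fin n → ℝ, (P *ᵥ v) ⬝ᵥ (P *ᵥ v) ≤ CP * (v ⬝ᵥ v) := by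
      intro v
      have hvv' : v ⬝ᵥ v = ∑ j, (v j) ^ 2 := by simp [dotProduct, sq]
      have h0 : (P *ᵥ v) ⬝ᵥ (P *ᵥ v) = ∑ i, (∑ j, P i j * v j) ^ 2 := by
        simp [dotProduct, Matrix.mulVec, sq]
      rw [h0, hvv', hCP, Finset.sum_mul]
      refine Finset.sum_le_sum fun i _ => ?_
      exact Finset.sum_mul_sq_le_sq_mul_sq Finset.univ (fun j => P i j) v
    set C : ℝ := Real.sqrt CP with hC
    have hC0 : 0 ≤ C := Real.sqrt_nonneg _
    have hvPv : ∀ v : Fin n → ℝ, v ⬝ᵥ P *ᵥ v ≤ C * (v ⬝ᵥ v) := by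
      intro v
      have h1 : (v ⬝ᵥ P *ᵥ v) ^ 2 ≤ (v ⬝ᵥ v) * ((P *ᵥ v) ⬝ᵥ (P *ᵥ v)) := by
        have := cs_psd (Matrix.PosSemidef.one) v (P *ᵥ v)
        simpa using this
      have h2 : (v ⬝ᵥ P *ᵥ v) ^ 2 ≤ CP * (v ⬝ᵥ v) ^ 2 := by
        calc (v ⬝ᵥ P *ᵥ v) ^ 2 ≤ (v ⬝ᵥ v) * (CP * (v ⬝ᵥ v)) :=
              le_trans h1 (mul_le_mul_of_nonneg_left (hPvv v) (dot_self_nonneg' v))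
          _ = CP * (v ⬝ᵥ v) ^ 2 := by ring
      have h3 : 0 ≤ v ⬝ᵥ P *ᵥ v := by simpa using hPsd.dotProduct_mulVec_nonneg v
      calc v ⬝ᵥ P *ᵥ v = Real.sqrt ((v ⬝ᵥ P *ᵥ v) ^ 2) := (Real.sqrt_sq h3).symm
        _ ≤ Real.sqrt (CP * (v ⬝ᵥ v) ^ 2) := Real.sqrt_le_sqrt h2
        _ = C * (v ⬝ᵥ v) := by
            rw [Real.sqrt_mul hCP0, Real.sqrt_sq (dot_self_nonneg' v), hC]
    have hvvQ : ∀ v : Fin n → ℝ, v ⬝ᵥ v ≤ C * (v ⬝ᵥ Q *ᵥ v) := by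
      intro v
      have e1 : v ⬝ᵥ Q *ᵥ (P *ᵥ v) = v ⬝ᵥ v := by
        rw [Matrix.mulVec_mulVec, hQP1, Matrix.one_mulVec]
      have e2 : (P *ᵥ v) ⬝ᵥ Q *ᵥ (P *ᵥ v) = v ⬝ᵥ P *ᵥ v := by
        rw [Matrix.mulVec_mulVec, hQP1, Matrix.one_mulVec, dotProduct_comm]
      have h1 : (v ⬝ᵥ v) ^ 2 ≤ (v ⬝ᵥ Q *ᵥ v) * (v ⬝ᵥ P *ᵥ v) := by
        have := cs_psd hQsd v (P *ᵥ v)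
        rw [e1, e2] at this; exact this
      rcases eq_or_lt_of_le (dot_self_nonneg' v) with h | h
      · rw [← h]; exact mul_nonneg hC0 (by simpa using hQsd.dotProduct_mulVec_nonneg v)
      · have h2 := hvPv v
        have h4 : 0 ≤ v ⬝ᵥ Q *ᵥ v := by simpa using hQsd.dotProduct_mulVec_nonneg v
        nlinarith
    have hbound : ∀ (t : ℕ) (i : Fin n), (z t i 0) ^ 2 ≤ C * (μ ^ t * V 0) := by
      intro t i
      have h1 : (z t i 0) ^ 2 ≤ xv t ⬝ᵥ xv t := by
        have h2 : xv t i * xv t i ≤ ∑ j, xv t j * xv t j :=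
          Finset.single_le_sum (f := fun j => xv t j * xv t j)
            (fun j _ => mul_self_nonneg _) (Finset.mem_univ i)
        calc (z t i 0) ^ 2 = xv t i * xv t i := by rw [hxv]; simp [sq]
          _ ≤ ∑ j, xv t j * xv t j := h2
          _ = xv t ⬝ᵥ xv t := rfl
      calc (z t i 0) ^ 2 ≤ xv t ⬝ᵥ xv t := h1
        _ ≤ C * V t := hvvQ (xv t)
        _ ≤ C * (μ ^ t * V 0) := mul_le_mul_of_nonneg_left (decay t).1 hC0
    have hgt : Tendsto (fun t : ℕ => Real.sqrt (C * (μ ^ t * V 0))) atTop (𝓝 0) := by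
      have h1 : Tendsto (fun t : ℕ => μ ^ t) atTop (𝓝 0) :=
        tendsto_pow_atTop_nhds_zero_of_lt_one hμ0.le hμ1
      have h2 : Tendsto (fun t : ℕ => C * (μ ^ t * V 0)) atTop (𝓝 0) := by
        have := (h1.mul_const (V 0)).const_mul C
        simpa using this
      have h3 := (Real.continuous_sqrt.tendsto 0).comp h2
      simpa [Function.comp_def] using h3
    refine tendsto_pi_nhds.mpr fun i => tendsto_pi_nhds.mpr fun j => ?_
    have hj : j = 0 := Subsingleton.elim _ _
    subst hj
    have hten : Tendsto (fun t => z t i 0) atTop (𝓝 0) := by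
      apply squeeze_zero_norm _ hgt
      intro t
      have h1 := hbound t i
      have h2 : |z t i 0| = Real.sqrt ((z t i 0) ^ 2) := (Real.sqrt_sq_eq_abs _).symm
      rw [Real.norm_eq_abs, h2]
      exact Real.sqrt_le_sqrt h1
    simpa using hten
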